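/- Let n ≥ 2 be an integer and let Z_n denote the cyclic group of order n. The strong power graph P_s(Z_n) is not connected if and only if n is a prime number. -/

import Mathlib

/-- The strong power graph of the cyclic group `ZMod n` (written additively):
two distinct vertices `x` and `y` are adjacent iff `a • x = b • y` for some
positive integers `a, b < n`. -/
def strongPowerGraphZ (n : ℕ) : SimpleGraph (ZMod n) where
  Adj x y := x ≠ y ∧ ∃ a b : ℕ, 0 < a ∧ a < n ∧ 0 < b ∧ b < n ∧ a • x = b • y
  symm := by
    constructor
    rintro x y ⟨h, a, b, ha, ha', hb, hb', hab⟩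
    exact ⟨h.symm, b, a, hb, hb', ha, ha', hab.symm⟩
  loopless := by
    constructor
    rintro x ⟨h, -⟩
    exact h rfl

lemma smul_zmod_eq_zero_iff (n k : ℕ) [NeZero n] (x : ZMod n) :
    k • x = 0 ↔ n ∣ k * x.val := by
  conv_lhs => rw [nsmul_eq_mul, ← ZMod.natCast_rightInverse x, ← Nat.cast_mul,
    ZMod.natCast_eq_zero_iff]

/-- For `n ≥ 2`, the strong power graph of `ZMod n` is not connected if and
only if `n` is a prime number. -/
theorem strongPowerGraphZ_not_connected_iff_prime (n : ℕ) (hn : 2 ≤ n) :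
    ¬ (strongPowerGraphZ n).Connected ↔ n.Prime := by
  haveI : Fact (1 < n) := ⟨hn⟩
  haveI : NeZero n := ⟨by omega⟩
  constructor
  · -- ¬ connected → prime
    intro hnc
    by_contra hnp
    apply hnc
    -- n is composite; let p be its least prime factor, p < n
    have hpprime : (n.minFac).Prime := Nat.minFac_prime (by omega)
    set p := n.minFac with hp
    have hpdvd : p ∣ n := Nat.minFac_dvd n
    have hpn : p < n := lt_of_le_of_ne (Nat.le_of_dvd (by omega) hpdvd)
      (fun h => hnp (h ▸ hpprime))
    have hp2 : 2 ≤ p := hpprime.two_le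
    -- every x is reachable from 0
    have key : ∀ x : ZMod n, (strongPowerGraphZ n).Reachable x 0 := by
      intro x
      by_cases hx : x = 0
      · rw [hx]
      · have hxval : x.val ≠ 0 := fun h => hx ((ZMod.val_eq_zero x).mp h)
        by_cases hcop : Nat.Coprime x.val n
        · -- x is a generator: x ~ p•x ~ 0
          have hndvd : ∀ k, 0 < k → k < n → ¬ (k • x = 0) := by
            intro k hk hk' hkx
            rw [smul_zmod_eq_zero_iff] at hkx
            have := (Nat.Coprime.dvd_of_dvd_mul_right
              (Nat.Coprime.symm hcop) hkx)
            have := Nat.le_of_dvd hk this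
            omega
          have hadj1 : (strongPowerGraphZ n).Adj x (p • x) := by
            refine ⟨?_, p, 1, by omega, hpn, by omega, by omega, (one_smul ℕ _).symm⟩
            intro hxe
            have : (p - 1) • x = 0 := by
              have hsucc : p • x = (p - 1) • x + x := by
                conv_lhs => rw [show p = (p-1) + 1 by omega]
                rw [succ_nsmul]
              rw [← hxe] at hsucc
              linear_combination (norm := abel) hsucc.symm
            exact hndvd (p - 1) (by omega) (by omega) this
          have hadj2 : (strongPowerGraphZ n).Adj (p • x) 0 := by
            refine ⟨?_, n / p, 1, Nat.div_pos (by omega) (by omega),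
              Nat.div_lt_self (by omega) (by omega), by omega, by omega, ?_⟩
            · exact fun h => hndvd p (by omega) hpn h
            · rw [smul_smul, Nat.div_mul_cancel hpdvd, smul_zero,
                smul_zmod_eq_zero_iff]
              exact Dvd.intro _ rfl
          exact hadj1.reachable.trans hadj2.reachable
        · -- gcd(x.val, n) > 1: x ~ 0 directly
          set g := Nat.gcd x.val n with hg
          have hg1 : g ≠ 1 := hcop
          have hgd : g ∣ n := Nat.gcd_dvd_right _ _
          have hgx : g ∣ x.val := Nat.gcd_dvd_left _ _
          have hg0 : 0 < g := Nat.gcd_pos_of_pos_left _ (by omega)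
          have hg2 : 2 ≤ g := by omega
          have hgn : g ≤ n := Nat.le_of_dvd (by omega) hgd
          refine SimpleGraph.Adj.reachable ⟨hx, n / g, 1,
            Nat.div_pos (by omega) (by omega),
            Nat.div_lt_self (by omega) (by omega), by omega, by omega, ?_⟩
          rw [smul_zero, smul_zmod_eq_zero_iff]
          obtain ⟨c, hc⟩ := hgx
          refine ⟨c, ?_⟩
          rw [hc, ← mul_assoc, Nat.div_mul_cancel hgd]
        
    haveI : Nonempty (ZMod n) := ⟨0⟩
    exact ⟨fun x y => (key x).trans (key y).symm⟩
  · -- prime → ¬ connected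
    intro hp hc
    have h01 : (0 : ZMod n) ≠ 1 := by
      exact fun h => one_ne_zero h.symm
    obtain ⟨w⟩ := hc.preconnected 0 1
    have h := w.adj_snd (SimpleGraph.Walk.not_nil_of_ne h01)
    · obtain ⟨hne, a, b, ha, ha', hb, hb', hab⟩ := h
      rw [smul_zero] at hab
      have := (smul_zmod_eq_zero_iff n b _).mp hab.symm
      rcases (Nat.Prime.dvd_mul hp).mp this with h1 | h2
      · exact absurd (Nat.le_of_dvd hb h1) (by omega)
      · have hlt : (w.getVert 1).val < n := ZMod.val_lt _
        have hv0 : (w.getVert 1).val = 0 := Nat.eq_zero_of_dvd_of_lt h2 hlt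
        exact hne ((ZMod.val_eq_zero _).mp hv0).symm
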